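/- For every n ≥ 1 and every real n-mode tensor T on ℝ² with ‖T‖ = 1 (a real n-qubit state), one has ‖T‖_{∞,ℝ} ≥ 2^{(1-n)/2} and ‖T‖_{1,ℝ} ≤ 2^{(n-1)/2}, and both inequalities are attained (e.g. by the real tensor T_{n,1} = (⊗ⁿu + ⊗ⁿconj(u))/√2 with u = (1,i)ᵀ/√2). In particular, α(2^{×n},ℝ) = 2^{(n-1)/2} and β(2^{×n},ℝ) = 2^{(1-n)/2}. -/

import Mathlib

noncomputable section


/-- The Euclidean norm of a vector in `𝕜^k`. -/
def vnorm {𝕜 : Type*} [RCLike 𝕜] {k : ℕ} (x : Fin k → 𝕜) : ℝ :=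
  Real.sqrt (∑ i, ‖x i‖ ^ 2)

/-- The rank-one tensor `x₁ ⊗ ⋯ ⊗ x_d` on `𝕜^n`. -/
def rankOne {𝕜 : Type*} [RCLike 𝕜] {d n : ℕ} (x : Fin d → Fin n → 𝕜) :
    (Fin d → Fin n) → 𝕜 :=
  fun i => ∏ j, x j (i j)

/-- The standard inner product `⟨T, Y⟩ = ∑ tᵢ · conj yᵢ` of tensors. -/
def tinner {𝕜 : Type*} [RCLike 𝕜] {d n : ℕ} (T Y : (Fin d → Fin n) → 𝕜) : 𝕜 :=
  ∑ i, T i * (starRingEnd 𝕜) (Y i)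

/-- The Hilbert–Schmidt norm of a tensor. -/
def hsNorm {𝕜 : Type*} [RCLike 𝕜] {d n : ℕ} (T : (Fin d → Fin n) → 𝕜) : ℝ :=
  Real.sqrt (∑ i, ‖T i‖ ^ 2)

/-- The spectral norm of a tensor:
`max {|⟨T, x₁⊗⋯⊗x_d⟩| : ‖x_j‖ = 1 for all j}`. -/
def specNorm {𝕜 : Type*} [RCLike 𝕜] {d n : ℕ} (T : (Fin d → Fin n) → 𝕜) : ℝ :=
  sSup {r : ℝ | ∃ x : Fin d → Fin n → 𝕜, (∀ j, vnorm (x j) = 1) ∧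
    r = ‖tinner T (rankOne x)‖}

/-- The nuclear norm of a tensor:
`min {∑ᵢ ∏ⱼ ‖x_{i,j}‖ : T = ∑ᵢ x_{i,1}⊗⋯⊗x_{i,d}}`. -/
def nucNorm {𝕜 : Type*} [RCLike 𝕜] {d n : ℕ} (T : (Fin d → Fin n) → 𝕜) : ℝ :=
  sInf {r : ℝ | ∃ (m : ℕ) (x : Fin m → Fin d → Fin n → 𝕜),
    T = (∑ i, rankOne (x i)) ∧ r = ∑ i, ∏ j, vnorm (x i j)}

/-- `α(n^{×d}, 𝕜)`. -/
def alphaN (𝕜 : Type*) [RCLike 𝕜] (d n : ℕ) : ℝ :=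
  sSup {r : ℝ | ∃ T : (Fin d → Fin n) → 𝕜, hsNorm T = 1 ∧ r = nucNorm T}

/-- `β(n^{×d}, 𝕜)`. -/
def betaN (𝕜 : Type*) [RCLike 𝕜] (d n : ℕ) : ℝ :=
  sInf {r : ℝ | ∃ T : (Fin d → Fin n) → 𝕜, hsNorm T = 1 ∧ r = specNorm T}

/-- The vector `u = (1, i)ᵀ/√2 ∈ ℂ²`. -/
def uvec : Fin 2 → ℂ := fun k =>
  if k = 0 then (Real.sqrt 2 : ℂ)⁻¹ else Complex.I * (Real.sqrt 2 : ℂ)⁻¹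

/-- The real tensor `T_{n,1} = (⊗ⁿu + ⊗ⁿ(conj u))/√2 = √2·Re(⊗ⁿu)` on `ℝ²`. -/
def Tn1 (n : ℕ) : (Fin n → Fin 2) → ℝ := fun i =>
  Real.sqrt 2 * (∏ j, uvec (i j)).re
namespace Stmt18

open Finset Real

lemma two_rpow_neg_half : (2:ℝ) ^ (-(1/2) : ℝ) = (Real.sqrt 2)⁻¹ := by
  rw [Real.rpow_neg (by norm_num), ← Real.sqrt_eq_rpow]

lemma two_rpow_half : (2:ℝ) ^ ((1/2) : ℝ) = Real.sqrt 2 := by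
  rw [← Real.sqrt_eq_rpow]

lemma cneg_eq (m : ℕ) : (2:ℝ) ^ ((1 - (((m:ℕ)+1 : ℕ) : ℝ)) / 2) = (Real.sqrt 2)⁻¹ ^ m := by
  have he : ((1:ℝ) - (((m:ℕ)+1 : ℕ) : ℝ)) / 2 = (-(1/2) : ℝ) * ((m:ℕ) : ℝ) := by
    push_cast; ring
  rw [he, Real.rpow_mul (by norm_num), two_rpow_neg_half, Real.rpow_natCast]

lemma cpos_eq (m : ℕ) : (2:ℝ) ^ (((((m:ℕ)+1 : ℕ) : ℝ) - 1) / 2) = (Real.sqrt 2) ^ m := by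
  have he : ((((m:ℕ)+1 : ℕ) : ℝ) - 1) / 2 = ((1/2) : ℝ) * ((m:ℕ) : ℝ) := by
    push_cast; ring
  rw [he, Real.rpow_mul (by norm_num), two_rpow_half, Real.rpow_natCast]

lemma s2_pos : (0:ℝ) < Real.sqrt 2 := Real.sqrt_pos.mpr (by norm_num)

lemma s2_sq : (Real.sqrt 2) ^ 2 = 2 := Real.sq_sqrt (by norm_num)

lemma cneg_pos (m : ℕ) : (0:ℝ) < (Real.sqrt 2)⁻¹ ^ m := by positivity

lemma cneg_mul_cpos (m : ℕ) : (Real.sqrt 2)⁻¹ ^ m * (Real.sqrt 2) ^ m = 1 := by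
  rw [← mul_pow, inv_mul_cancel₀ (ne_of_gt s2_pos), one_pow]

lemma cneg_sq (m : ℕ) : ((Real.sqrt 2)⁻¹ ^ m) ^ 2 = ((2:ℝ) ^ m)⁻¹ := by
  rw [← pow_mul, mul_comm, pow_mul, inv_pow, s2_sq, inv_pow]

-- basic norms
lemma vnorm_real {k : ℕ} (x : Fin k → ℝ) : vnorm x = Real.sqrt (∑ i, x i ^ 2) := by
  simp [vnorm, Real.norm_eq_abs, sq_abs]

lemma vnorm_nonneg {k : ℕ} (x : Fin k → ℝ) : 0 ≤ vnorm x := Real.sqrt_nonneg _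

lemma vnorm_basis (k0 : Fin 2) : vnorm (fun k : Fin 2 => if k = k0 then (1:ℝ) else 0) = 1 := by
  rw [vnorm_real]
  have : ∑ k : Fin 2, (if k = k0 then (1:ℝ) else 0) ^ 2 = 1 := by
    fin_cases k0 <;> simp [Fin.sum_univ_two]
  rw [this, Real.sqrt_one]

lemma abs_le_vnorm {k : ℕ} (x : Fin k → ℝ) (j : Fin k) : |x j| ≤ vnorm x := by
  rw [vnorm_real, ← Real.sqrt_sq_eq_abs]
  exact Real.sqrt_le_sqrt (Finset.single_le_sum (f := fun i => x i ^ 2)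
    (fun i _ => sq_nonneg _) (mem_univ j))

lemma tinner_real {d k : ℕ} (T Y : (Fin d → Fin k) → ℝ) :
    tinner T Y = ∑ i, T i * Y i := by
  simp [tinner]

lemma sum_succ_eq {m : ℕ} (g : (Fin (m+1) → Fin 2) → ℝ) :
    ∑ i, g i = ∑ p : Fin m → Fin 2, ∑ k : Fin 2, g (Fin.cons k p) := by
  rw [← (Fintype.sum_equiv (Fin.consEquiv (fun _ => Fin 2))
    (fun q => g (Fin.cons q.1 q.2)) g (fun q => rfl))]
  rw [Fintype.sum_prod_type]
  exact Finset.sum_comm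

lemma prod_cons_eval {m : ℕ} (x0 : Fin 2 → ℝ) (xs : Fin m → Fin 2 → ℝ)
    (i : Fin (m+1) → Fin 2) :
    ∏ j, (Fin.cons x0 xs : ∀ _ : Fin (m+1), Fin 2 → ℝ) j (i j)
      = x0 (i 0) * ∏ j, xs j (Fin.tail i j) := by
  rw [Fin.prod_univ_succ]
  simp [Fin.tail]

lemma prod_ind {m : ℕ} (p q : Fin m → Fin 2) :
    (∏ j, if p j = q j then (1:ℝ) else 0) = if p = q then 1 else 0 := by
  by_cases h : p = q
  · simp [h]
  · obtain ⟨j, hj⟩ := Function.ne_iff.mp h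
    rw [if_neg h]
    exact Finset.prod_eq_zero (Finset.mem_univ j) (by simp [hj])

end Stmt18
namespace Stmt18

open Finset Real

/-- The set defining the spectral norm. -/
def specSet {d k : ℕ} (T : (Fin d → Fin k) → ℝ) : Set ℝ :=
  {r : ℝ | ∃ x : Fin d → Fin k → ℝ, (∀ j, vnorm (x j) = 1) ∧
    r = ‖tinner T (rankOne x)‖}

lemma specNorm_eq {d k : ℕ} (T : (Fin d → Fin k) → ℝ) :
    specNorm T = sSup (specSet T) := rfl

lemma specSet_bddAbove {d k : ℕ} (T : (Fin d → Fin k) → ℝ) :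
    BddAbove (specSet T) := by
  refine ⟨∑ i, |T i|, fun r hr => ?_⟩
  obtain ⟨x, hx, rfl⟩ := hr
  rw [tinner_real, Real.norm_eq_abs]
  calc |∑ i, T i * rankOne x i| ≤ ∑ i, |T i * rankOne x i| :=
        Finset.abs_sum_le_sum_abs _ _
    _ ≤ ∑ i, |T i| := by
        refine Finset.sum_le_sum fun i _ => ?_
        rw [abs_mul]
        have h1 : |rankOne x i| ≤ 1 := by
          rw [rankOne, abs_prod]
          calc ∏ j, |x j (i j)| ≤ ∏ j, vnorm (x j) :=
                Finset.prod_le_prod (fun j _ => abs_nonneg _)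
                  (fun j _ => abs_le_vnorm _ _)
            _ = 1 := by simp [hx]
        nlinarith [abs_nonneg (T i), abs_nonneg (rankOne x i)]

lemma mem_specSet {d k : ℕ} (T : (Fin d → Fin k) → ℝ) (x : Fin d → Fin k → ℝ)
    (hx : ∀ j, vnorm (x j) = 1) : ‖tinner T (rankOne x)‖ ∈ specSet T :=
  ⟨x, hx, rfl⟩

lemma hsNorm_sq {d k : ℕ} (T : (Fin d → Fin k) → ℝ) (hT : hsNorm T = 1) :
    ∑ i, T i ^ 2 = 1 := by
  rw [hsNorm, Real.sqrt_eq_one] at hT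
  simpa [Real.norm_eq_abs, sq_abs] using hT

lemma spec_lower {m : ℕ} (T : (Fin (m+1) → Fin 2) → ℝ) (hT : hsNorm T = 1) :
    (Real.sqrt 2)⁻¹ ^ m ≤ specNorm T := by
  have hsum : ∑ p : Fin m → Fin 2, ∑ k : Fin 2, T (Fin.cons k p) ^ 2 = 1 := by
    rw [← sum_succ_eq (fun i => T i ^ 2)]
    exact hsNorm_sq T hT
  -- pick best group
  obtain ⟨p₀, -, hp₀⟩ := Finset.exists_max_image Finset.univ
    (fun p : Fin m → Fin 2 => ∑ k : Fin 2, T (Fin.cons k p) ^ 2) univ_nonempty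
  set s : ℝ := ∑ k : Fin 2, T (Fin.cons k p₀) ^ 2 with hs_def
  have hcard : (Finset.univ : Finset (Fin m → Fin 2)).card = 2 ^ m := by
    simp [Fintype.card_fun]
  have h1le : (1:ℝ) ≤ 2 ^ m * s := by
    calc (1:ℝ) = ∑ p : Fin m → Fin 2, ∑ k : Fin 2, T (Fin.cons k p) ^ 2 := hsum.symm
      _ ≤ ∑ _p : Fin m → Fin 2, s := Finset.sum_le_sum fun p _ => hp₀ p (mem_univ p)
      _ = 2 ^ m * s := by rw [Finset.sum_const, hcard, nsmul_eq_mul]; push_cast; ring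
  have hspos : 0 < s := by
    by_contra h
    push_neg at h
    nlinarith [pow_pos (by norm_num : (0:ℝ) < 2) m]
  have hsinv : ((2:ℝ) ^ m)⁻¹ ≤ s := by
    rw [inv_le_iff_one_le_mul₀ (by positivity)]
    linarith [h1le]
  -- the witness
  set x : Fin (m+1) → Fin 2 → ℝ :=
    Fin.cons (fun k => T (Fin.cons k p₀) / Real.sqrt s)
      (fun j k => if k = p₀ j then 1 else 0) with hx_def
  have hxnorm : ∀ j, vnorm (x j) = 1 := by
    refine Fin.cases ?_ ?_
    · rw [hx_def, Fin.cons_zero, vnorm_real]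
      have h : ∑ k : Fin 2, (T (Fin.cons k p₀) / Real.sqrt s) ^ 2 = 1 := by
        simp only [div_pow, Real.sq_sqrt hspos.le]
        rw [← Finset.sum_div, ← hs_def, div_self hspos.ne']
      rw [h, Real.sqrt_one]
    · intro j
      rw [hx_def, Fin.cons_succ]
      exact vnorm_basis (p₀ j)
  -- the value
  have hval : tinner T (rankOne x) = Real.sqrt s := by
    rw [tinner_real]
    rw [sum_succ_eq (fun i => T i * rankOne x i)]
    have hterm : ∀ (p : Fin m → Fin 2) (k : Fin 2),
        T (Fin.cons k p) * rankOne x (Fin.cons k p)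
          = (if p = p₀ then T (Fin.cons k p₀) * (T (Fin.cons k p₀) / Real.sqrt s) else 0) := by
      intro p k
      rw [rankOne, hx_def, prod_cons_eval]
      simp only [Fin.cons_zero, Fin.tail_cons]
      have : (∏ j, if p j = p₀ j then (1:ℝ) else 0) = if p = p₀ then 1 else 0 :=
        prod_ind p p₀
      rw [this]
      by_cases hpq : p = p₀
      · subst hpq; simp
      · simp [hpq]
    calc ∑ p : Fin m → Fin 2, ∑ k : Fin 2, T (Fin.cons k p) * rankOne x (Fin.cons k p)
        = ∑ p : Fin m → Fin 2, (if p = p₀ then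
            ∑ k : Fin 2, T (Fin.cons k p₀) * (T (Fin.cons k p₀) / Real.sqrt s) else 0) := by
          refine Finset.sum_congr rfl fun p _ => ?_
          rw [Finset.sum_congr rfl fun k _ => hterm p k]
          by_cases hpq : p = p₀ <;> simp [hpq]
      _ = ∑ k : Fin 2, T (Fin.cons k p₀) * (T (Fin.cons k p₀) / Real.sqrt s) := by
          rw [Finset.sum_ite_eq' Finset.univ p₀]
          simp
      _ = (∑ k : Fin 2, T (Fin.cons k p₀) ^ 2) / Real.sqrt s := by
          rw [Finset.sum_div]
          exact Finset.sum_congr rfl fun k _ => by ring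
      _ = s / Real.sqrt s := by rw [← hs_def]
      _ = Real.sqrt s := by
          rw [Real.div_sqrt]
  have hmem : Real.sqrt s ∈ specSet T := by
    have := mem_specSet T x hxnorm
    rwa [hval, Real.norm_eq_abs, abs_of_nonneg (Real.sqrt_nonneg _)] at this
  have hge : (Real.sqrt 2)⁻¹ ^ m ≤ Real.sqrt s := by
    rw [Real.le_sqrt (by positivity) hspos.le, cneg_sq]
    exact hsinv
  exact hge.trans (le_csSup (specSet_bddAbove T) hmem)

end Stmt18
namespace Stmt18

open Finset Real

/-- The set defining the nuclear norm. -/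
def nucSet {d k : ℕ} (T : (Fin d → Fin k) → ℝ) : Set ℝ :=
  {r : ℝ | ∃ (m : ℕ) (x : Fin m → Fin d → Fin k → ℝ),
    T = (∑ i, rankOne (x i)) ∧ r = ∑ i, ∏ j, vnorm (x i j)}

lemma nucNorm_eq {d k : ℕ} (T : (Fin d → Fin k) → ℝ) :
    nucNorm T = sInf (nucSet T) := rfl

lemma nucSet_bddBelow {d k : ℕ} (T : (Fin d → Fin k) → ℝ) :
    BddBelow (nucSet T) := by
  refine ⟨0, fun r hr => ?_⟩
  obtain ⟨m, x, -, rfl⟩ := hr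
  exact Finset.sum_nonneg fun i _ =>
    Finset.prod_nonneg fun j _ => vnorm_nonneg _

/-- The canonical splitting decomposition along mode `0`. -/
def dec {m : ℕ} (T : (Fin (m+1) → Fin 2) → ℝ) (p : Fin m → Fin 2) :
    Fin (m+1) → Fin 2 → ℝ :=
  Fin.cons (fun k => T (Fin.cons k p)) (fun j k => if k = p j then 1 else 0)

lemma dec_sum {m : ℕ} (T : (Fin (m+1) → Fin 2) → ℝ) :
    T = ∑ p : Fin m → Fin 2, rankOne (dec T p) := by
  funext i
  rw [Finset.sum_apply]
  have hterm : ∀ p : Fin m → Fin 2, rankOne (dec T p) i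
      = if Fin.tail i = p then T (Fin.cons (i 0) p) else 0 := by
    intro p
    rw [rankOne, dec, prod_cons_eval, prod_ind (Fin.tail i) p]
    by_cases h : Fin.tail i = p <;> simp [h]
  rw [Finset.sum_congr rfl fun p _ => hterm p, Finset.sum_ite_eq Finset.univ (Fin.tail i)]
  simp [Fin.cons_self_tail]

lemma dec_cost {m : ℕ} (T : (Fin (m+1) → Fin 2) → ℝ) (p : Fin m → Fin 2) :
    ∏ j, vnorm (dec T p j) = Real.sqrt (∑ k : Fin 2, T (Fin.cons k p) ^ 2) := by
  rw [Fin.prod_univ_succ, dec]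
  simp only [Fin.cons_zero, Fin.cons_succ]
  rw [vnorm_real]
  have : ∀ j : Fin m, vnorm (fun k : Fin 2 => if k = p j then (1:ℝ) else 0) = 1 :=
    fun j => vnorm_basis (p j)
  rw [Finset.prod_congr rfl fun j _ => this j]
  simp

lemma dec_cost_le {m : ℕ} (T : (Fin (m+1) → Fin 2) → ℝ) (hT : hsNorm T = 1) :
    ∑ p : Fin m → Fin 2, ∏ j, vnorm (dec T p j) ≤ Real.sqrt 2 ^ m := by
  have hsum : ∑ p : Fin m → Fin 2, ∑ k : Fin 2, T (Fin.cons k p) ^ 2 = 1 := by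
    rw [← sum_succ_eq (fun i => T i ^ 2)]; exact hsNorm_sq T hT
  rw [Finset.sum_congr rfl fun p _ => dec_cost T p]
  set F : (Fin m → Fin 2) → ℝ := fun p => ∑ k : Fin 2, T (Fin.cons k p) ^ 2 with hF
  have hFnn : ∀ p, 0 ≤ F p := fun p => Finset.sum_nonneg fun k _ => sq_nonneg _
  have hsq : (∑ p : Fin m → Fin 2, Real.sqrt (F p)) ^ 2 ≤ 2 ^ m := by
    calc (∑ p : Fin m → Fin 2, Real.sqrt (F p)) ^ 2
        ≤ ((Finset.univ : Finset (Fin m → Fin 2)).card : ℝ)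
            * ∑ p : Fin m → Fin 2, Real.sqrt (F p) ^ 2 := sq_sum_le_card_mul_sum_sq
      _ = 2 ^ m := by
          rw [Finset.sum_congr rfl fun p _ => Real.sq_sqrt (hFnn p)]
          rw [hsum]
          simp [Fintype.card_fun]
  have hnn : 0 ≤ ∑ p : Fin m → Fin 2, Real.sqrt (F p) :=
    Finset.sum_nonneg fun p _ => Real.sqrt_nonneg _
  calc ∑ p : Fin m → Fin 2, Real.sqrt (F p)
      = Real.sqrt ((∑ p : Fin m → Fin 2, Real.sqrt (F p)) ^ 2) := by
        rw [Real.sqrt_sq hnn]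
    _ ≤ Real.sqrt (2 ^ m) := Real.sqrt_le_sqrt hsq
    _ = Real.sqrt 2 ^ m := by
        rw [show ((2:ℝ) ^ m) = (Real.sqrt 2 ^ m) ^ 2 by
          rw [← pow_mul, mul_comm, pow_mul, s2_sq]]
        exact Real.sqrt_sq (by positivity)

lemma dec_mem {m : ℕ} (T : (Fin (m+1) → Fin 2) → ℝ) :
    (∑ p : Fin m → Fin 2, ∏ j, vnorm (dec T p j)) ∈ nucSet T := by
  refine ⟨2 ^ m, fun a => dec T (finFunctionFinEquiv.symm a), ?_, ?_⟩
  · exact (dec_sum T).trans (Equiv.sum_comp finFunctionFinEquiv.symm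
      (fun p => rankOne (dec T p))).symm
  · exact (Equiv.sum_comp finFunctionFinEquiv.symm
      (fun p => ∏ j, vnorm (dec T p j))).symm

lemma nuc_upper {m : ℕ} (T : (Fin (m+1) → Fin 2) → ℝ) (hT : hsNorm T = 1) :
    nucNorm T ≤ Real.sqrt 2 ^ m :=
  le_trans (csInf_le (nucSet_bddBelow T) (dec_mem T)) (dec_cost_le T hT)

end Stmt18
namespace Stmt18

open Finset Real

lemma uvec_zero : uvec 0 = ((Real.sqrt 2 : ℝ) : ℂ)⁻¹ := rfl

lemma uvec_one : uvec 1 = Complex.I * ((Real.sqrt 2 : ℝ) : ℂ)⁻¹ := rfl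

lemma c2_sq : (((Real.sqrt 2 : ℝ) : ℂ)) ^ 2 = 2 := by
  rw [← Complex.ofReal_pow, s2_sq]; norm_num

lemma c2_ne : (((Real.sqrt 2 : ℝ) : ℂ)) ≠ 0 := by
  simpa using s2_pos.ne'

lemma sum_uvec_sq : ∑ k : Fin 2, uvec k ^ 2 = 0 := by
  rw [Fin.sum_univ_two, uvec_zero, uvec_one, mul_pow, Complex.I_sq, inv_pow, c2_sq]
  ring

lemma sum_normSq_uvec : ∑ k : Fin 2, Complex.normSq (uvec k) = 1 := by
  rw [Fin.sum_univ_two, uvec_zero, uvec_one]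
  have h1 : Complex.normSq (((Real.sqrt 2 : ℝ) : ℂ)⁻¹) = 1 / 2 := by
    rw [Complex.normSq_inv, Complex.normSq_ofReal]
    rw [← sq, s2_sq]
    norm_num
  rw [Complex.normSq_mul, Complex.normSq_I, h1]
  norm_num

/-- The complex Gaussian-type sum: distribute tensor-product sums. -/
lemma sum_prod_eq {β : Type*} [CommSemiring β] {n : ℕ} (f : Fin n → Fin 2 → β) :
    ∑ i : Fin n → Fin 2, ∏ j, f j (i j) = ∏ j, (f j 0 + f j 1) := by
  rw [Finset.prod_congr rfl fun j _ => (Fin.sum_univ_two (f j)).symm]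
  exact (Fintype.prod_sum f).symm

lemma hsNorm_Tn1 (m : ℕ) : hsNorm (Tn1 (m+1)) = 1 := by
  rw [hsNorm]
  have key : ∑ i : Fin (m+1) → Fin 2, ‖Tn1 (m+1) i‖ ^ 2 = 1 := by
    have hpt : ∀ i : Fin (m+1) → Fin 2, ‖Tn1 (m+1) i‖ ^ 2
        = ((∏ j, uvec (i j)) ^ 2).re + Complex.normSq (∏ j, uvec (i j)) := by
      intro i
      rw [Real.norm_eq_abs, sq_abs, Tn1]
      set z := ∏ j, uvec (i j)
      rw [mul_pow, s2_sq]
      have hz : (z ^ 2).re = z.re * z.re - z.im * z.im := by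
        rw [pow_two, Complex.mul_re]
      rw [Complex.normSq_apply, hz]
      ring
    rw [Finset.sum_congr rfl fun i _ => hpt i, Finset.sum_add_distrib]
    have h1 : ∑ i : Fin (m+1) → Fin 2, ((∏ j, uvec (i j)) ^ 2).re = 0 := by
      have : ∑ i : Fin (m+1) → Fin 2, (∏ j, uvec (i j)) ^ 2 = 0 := by
        have hp : ∀ i : Fin (m+1) → Fin 2, (∏ j, uvec (i j)) ^ 2
            = ∏ j, (uvec (i j)) ^ 2 := fun i => by rw [Finset.prod_pow]
        rw [Finset.sum_congr rfl fun i _ => hp i]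
        rw [sum_prod_eq (fun j k => uvec k ^ 2)]
        have h0 : (uvec 0 ^ 2 + uvec 1 ^ 2) = 0 := by
          have := sum_uvec_sq
          rwa [Fin.sum_univ_two] at this
        rw [Finset.prod_congr rfl fun j _ => h0]
        simp
      calc ∑ i : Fin (m+1) → Fin 2, ((∏ j, uvec (i j)) ^ 2).re
          = (∑ i : Fin (m+1) → Fin 2, (∏ j, uvec (i j)) ^ 2).re := by
            rw [Complex.re_sum]
        _ = 0 := by rw [this]; simp
    have h2 : ∑ i : Fin (m+1) → Fin 2, Complex.normSq (∏ j, uvec (i j)) = 1 := by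
      have hp : ∀ i : Fin (m+1) → Fin 2, Complex.normSq (∏ j, uvec (i j))
          = ∏ j, Complex.normSq (uvec (i j)) := fun i => map_prod _ _ _
      rw [Finset.sum_congr rfl fun i _ => hp i]
      rw [sum_prod_eq (fun j k => Complex.normSq (uvec k))]
      have h0 : Complex.normSq (uvec 0) + Complex.normSq (uvec 1) = 1 := by
        have := sum_normSq_uvec
        rwa [Fin.sum_univ_two] at this
      rw [Finset.prod_congr rfl fun j _ => h0]
      simp
    rw [h1, h2]; ring
  rw [key, Real.sqrt_one]

end Stmt18
namespace Stmt18

open Finset Real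

/-- Inner product of `Tn1` with a rank-one tensor, in closed form. -/
lemma tinner_Tn1 {n : ℕ} (x : Fin n → Fin 2 → ℝ) :
    tinner (Tn1 n) (rankOne x) = Real.sqrt 2 *
      (∏ j, ((((x j 0 : ℝ) : ℂ) + Complex.I * ((x j 1 : ℝ) : ℂ))
        * (((Real.sqrt 2 : ℝ) : ℂ))⁻¹)).re := by
  rw [tinner_real]
  have hpt : ∀ i : Fin n → Fin 2, Tn1 n i * rankOne x i
      = Real.sqrt 2 * ((∏ j, (uvec (i j) * ((x j (i j) : ℝ) : ℂ)))).re := by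
    intro i
    rw [Tn1, rankOne]
    have : (∏ j, (uvec (i j) * ((x j (i j) : ℝ) : ℂ)))
        = (∏ j, uvec (i j)) * (((∏ j, x j (i j) : ℝ)) : ℂ) := by
      rw [Finset.prod_mul_distrib, Complex.ofReal_prod]
    rw [this, Complex.mul_re, Complex.ofReal_re, Complex.ofReal_im]
    ring
  rw [Finset.sum_congr rfl fun i _ => hpt i, ← Finset.mul_sum]
  congr 1
  rw [← Complex.re_sum]
  congr 1
  rw [sum_prod_eq (fun j k => uvec k * ((x j k : ℝ) : ℂ))]
  refine Finset.prod_congr rfl fun j _ => ?_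
  rw [uvec_zero, uvec_one]
  ring

lemma vnorm_fin2 (x : Fin 2 → ℝ) : vnorm x = Real.sqrt (x 0 ^ 2 + x 1 ^ 2) := by
  rw [vnorm_real, Fin.sum_univ_two]

lemma abs_factor (x : Fin 2 → ℝ) :
    ‖(((x 0 : ℝ) : ℂ) + Complex.I * ((x 1 : ℝ) : ℂ))
      * (((Real.sqrt 2 : ℝ) : ℂ))⁻¹‖ = vnorm x * (Real.sqrt 2)⁻¹ := by
  rw [norm_mul, norm_inv, Complex.norm_real, Real.norm_eq_abs,
    abs_of_nonneg (Real.sqrt_nonneg 2)]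
  congr 1
  have : (((x 0 : ℝ) : ℂ) + Complex.I * ((x 1 : ℝ) : ℂ))
      = (((x 0 : ℝ) : ℂ) + ((x 1 : ℝ) : ℂ) * Complex.I) := by ring
  rw [this, Complex.norm_def, Complex.normSq_add_mul_I, vnorm_fin2]

/-- Key estimate: `|⟨Tn1, x₁⊗⋯⊗x_n⟩| ≤ 2^{(1-n)/2} ∏ ‖x_j‖`. -/
lemma tinner_Tn1_le {m : ℕ} (x : Fin (m+1) → Fin 2 → ℝ) :
    ‖tinner (Tn1 (m+1)) (rankOne x)‖
      ≤ (Real.sqrt 2)⁻¹ ^ m * ∏ j, vnorm (x j) := by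
  rw [tinner_Tn1, Real.norm_eq_abs, abs_mul,
    abs_of_nonneg (Real.sqrt_nonneg 2)]
  set w : Fin (m+1) → ℂ := fun j =>
    ((((x j 0 : ℝ) : ℂ) + Complex.I * ((x j 1 : ℝ) : ℂ))
      * (((Real.sqrt 2 : ℝ) : ℂ))⁻¹) with hw
  calc Real.sqrt 2 * |(∏ j, w j).re|
      ≤ Real.sqrt 2 * ‖∏ j, w j‖ := by
        have := Complex.abs_re_le_norm (∏ j, w j)
        nlinarith [Real.sqrt_nonneg 2]
    _ = Real.sqrt 2 * ∏ j, ‖w j‖ := by rw [norm_prod]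
    _ = Real.sqrt 2 * ∏ j, (vnorm (x j) * (Real.sqrt 2)⁻¹) := by
        rw [Finset.prod_congr rfl fun j _ => abs_factor (x j)]
    _ = (Real.sqrt 2)⁻¹ ^ m * ∏ j, vnorm (x j) := by
        rw [Finset.prod_mul_distrib, Finset.prod_const]
        have hcard : (Finset.univ : Finset (Fin (m+1))).card = m + 1 := by simp
        rw [hcard, pow_succ]
        have h2 : Real.sqrt 2 * ((Real.sqrt 2)⁻¹ ^ m * (Real.sqrt 2)⁻¹)
            = (Real.sqrt 2)⁻¹ ^ m * (Real.sqrt 2 * (Real.sqrt 2)⁻¹) := by ring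
        rw [mul_comm (∏ j, vnorm (x j)), ← mul_assoc, h2,
          mul_inv_cancel₀ s2_pos.ne', mul_one]

/-- The attaining witness: all `x_j = e₀`. -/
lemma tinner_Tn1_attain {m : ℕ} :
    tinner (Tn1 (m+1)) (rankOne (fun _ : Fin (m+1) => fun k : Fin 2 =>
      if k = 0 then (1:ℝ) else 0)) = (Real.sqrt 2)⁻¹ ^ m := by
  rw [tinner_Tn1]
  have hfac : ∀ j : Fin (m+1),
      ((((if (0:Fin 2) = 0 then (1:ℝ) else 0 : ℝ) : ℂ)
        + Complex.I * (((if (1:Fin 2) = 0 then (1:ℝ) else 0) : ℝ) : ℂ))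
        * (((Real.sqrt 2 : ℝ) : ℂ))⁻¹) = (((Real.sqrt 2 : ℝ) : ℂ))⁻¹ := by
    intro j; norm_num
  rw [Finset.prod_congr rfl fun j _ => hfac j, Finset.prod_const]
  have hcard : (Finset.univ : Finset (Fin (m+1))).card = m + 1 := by simp
  rw [hcard]
  have : ((((Real.sqrt 2 : ℝ) : ℂ))⁻¹ ^ (m+1)).re = (Real.sqrt 2)⁻¹ ^ (m+1) := by
    rw [← Complex.ofReal_inv, ← Complex.ofReal_pow, Complex.ofReal_re]
  rw [this, pow_succ]
  rw [← mul_assoc]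
  rw [mul_comm (Real.sqrt 2), mul_assoc, mul_inv_cancel₀ s2_pos.ne', mul_one]

end Stmt18
namespace Stmt18

open Finset Real

lemma spec_Tn1 (m : ℕ) : specNorm (Tn1 (m+1)) = (Real.sqrt 2)⁻¹ ^ m := by
  refine le_antisymm ?_ (spec_lower _ (hsNorm_Tn1 m))
  rw [specNorm_eq]
  refine Real.sSup_le ?_ (by positivity)
  rintro r ⟨x, hx, rfl⟩
  calc ‖tinner (Tn1 (m+1)) (rankOne x)‖
      ≤ (Real.sqrt 2)⁻¹ ^ m * ∏ j, vnorm (x j) := tinner_Tn1_le x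
    _ = (Real.sqrt 2)⁻¹ ^ m := by
        rw [Finset.prod_congr rfl fun j (_ : j ∈ Finset.univ) => hx j]
        simp

lemma tinner_sum {d k M : ℕ} (T : (Fin d → Fin k) → ℝ)
    (Y : Fin M → (Fin d → Fin k) → ℝ) :
    tinner T (∑ a, Y a) = ∑ a, tinner T (Y a) := by
  simp only [tinner_real, Finset.sum_apply, Finset.mul_sum]
  exact Finset.sum_comm

lemma nuc_Tn1 (m : ℕ) : nucNorm (Tn1 (m+1)) = Real.sqrt 2 ^ m := by
  refine le_antisymm (nuc_upper _ (hsNorm_Tn1 m)) ?_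
  rw [nucNorm_eq]
  refine le_csInf ⟨_, dec_mem (Tn1 (m+1))⟩ ?_
  rintro r ⟨M, x, hdec, rfl⟩
  have h1 : (1:ℝ) = ∑ a : Fin M, tinner (Tn1 (m+1)) (rankOne (x a)) := by
    have h2 : tinner (Tn1 (m+1)) (Tn1 (m+1)) = 1 := by
      rw [tinner_real]
      have := hsNorm_sq _ (hsNorm_Tn1 m)
      rw [← this]
      exact Finset.sum_congr rfl fun i _ => (sq (Tn1 (m+1) i)).symm
    rw [← h2]
    nth_rewrite 2 [hdec]
    exact tinner_sum _ _
  have h3 : (1:ℝ) ≤ (Real.sqrt 2)⁻¹ ^ m * ∑ a : Fin M, ∏ j, vnorm (x a j) := by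
    rw [Finset.mul_sum]
    calc (1:ℝ) = ∑ a : Fin M, tinner (Tn1 (m+1)) (rankOne (x a)) := h1
      _ ≤ ∑ a : Fin M, ‖tinner (Tn1 (m+1)) (rankOne (x a))‖ :=
          Finset.sum_le_sum fun a _ => le_abs_self _
      _ ≤ ∑ a : Fin M, (Real.sqrt 2)⁻¹ ^ m * ∏ j, vnorm (x a j) :=
          Finset.sum_le_sum fun a _ => tinner_Tn1_le (x a)
  calc Real.sqrt 2 ^ m = Real.sqrt 2 ^ m * 1 := (mul_one _).symm
    _ ≤ Real.sqrt 2 ^ m * ((Real.sqrt 2)⁻¹ ^ m * ∑ a : Fin M, ∏ j, vnorm (x a j)) := by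
        refine mul_le_mul_of_nonneg_left h3 (by positivity)
    _ = ∑ a : Fin M, ∏ j, vnorm (x a j) := by
        rw [← mul_assoc, mul_comm (Real.sqrt 2 ^ m), cneg_mul_cpos, one_mul]

lemma alpha_eq (m : ℕ) : alphaN ℝ (m+1) 2 = Real.sqrt 2 ^ m := by
  have hbdd : BddAbove {r : ℝ | ∃ T : (Fin (m+1) → Fin 2) → ℝ,
      hsNorm T = 1 ∧ r = nucNorm T} := by
    refine ⟨Real.sqrt 2 ^ m, ?_⟩
    rintro r ⟨T, hT, rfl⟩
    exact nuc_upper T hT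
  refine le_antisymm ?_ ?_
  · refine Real.sSup_le ?_ (by positivity)
    rintro r ⟨T, hT, rfl⟩
    exact nuc_upper T hT
  · exact le_csSup hbdd ⟨Tn1 (m+1), hsNorm_Tn1 m, (nuc_Tn1 m).symm⟩

lemma beta_eq (m : ℕ) : betaN ℝ (m+1) 2 = (Real.sqrt 2)⁻¹ ^ m := by
  have hbdd : BddBelow {r : ℝ | ∃ T : (Fin (m+1) → Fin 2) → ℝ,
      hsNorm T = 1 ∧ r = specNorm T} := by
    refine ⟨(Real.sqrt 2)⁻¹ ^ m, ?_⟩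
    rintro r ⟨T, hT, rfl⟩
    exact spec_lower T hT
  refine le_antisymm ?_ ?_
  · exact csInf_le hbdd ⟨Tn1 (m+1), hsNorm_Tn1 m, (spec_Tn1 m).symm⟩
  · refine le_csInf ⟨_, ⟨Tn1 (m+1), hsNorm_Tn1 m, rfl⟩⟩ ?_
    rintro r ⟨T, hT, rfl⟩
    exact spec_lower T hT

end Stmt18

/-- Every real `n`-qubit state `T` satisfies
`‖T‖_{∞,ℝ} ≥ 2^{(1-n)/2}` and `‖T‖_{1,ℝ} ≤ 2^{(n-1)/2}`, both attained by `T_{n,1}`;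
in particular `α(2^{×n},ℝ) = 2^{(n-1)/2}` and `β(2^{×n},ℝ) = 2^{(1-n)/2}`. -/
theorem stmt18 (n : ℕ) (hn : 1 ≤ n) :
    (∀ T : (Fin n → Fin 2) → ℝ, hsNorm T = 1 →
      (2 : ℝ) ^ ((1 - (n : ℝ)) / 2) ≤ specNorm T ∧
      nucNorm T ≤ (2 : ℝ) ^ (((n : ℝ) - 1) / 2)) ∧
    specNorm (Tn1 n) = (2 : ℝ) ^ ((1 - (n : ℝ)) / 2) ∧
    nucNorm (Tn1 n) = (2 : ℝ) ^ (((n : ℝ) - 1) / 2) ∧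
    alphaN ℝ n 2 = (2 : ℝ) ^ (((n : ℝ) - 1) / 2) ∧
    betaN ℝ n 2 = (2 : ℝ) ^ ((1 - (n : ℝ)) / 2) := by
  obtain ⟨m, rfl⟩ : ∃ m, n = m + 1 := ⟨n - 1, (Nat.succ_pred_eq_of_pos hn).symm⟩
  rw [Stmt18.cneg_eq m, Stmt18.cpos_eq m]
  exact ⟨fun T hT => ⟨Stmt18.spec_lower T hT, Stmt18.nuc_upper T hT⟩,
    Stmt18.spec_Tn1 m, Stmt18.nuc_Tn1 m, Stmt18.alpha_eq m, Stmt18.beta_eq m⟩
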